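/- Let (X, μ) be a measure space and f, g, h ∈ L²(μ) real-valued with ∫ g² dμ > 0 and ∫ h² dμ > 0, and suppose |∫ gh dμ| ≤ ε (∫ g² dμ)^{1/2} (∫ h² dμ)^{1/2} for some 0 < ε < 1. Then ∫ ( -(1/(1-ε)) f² + f h - (1/2) h² + 2 f g - g² ) dμ ≤ 0. -/

import Mathlib

open MeasureTheory

private lemma integrable_mul_of_L2 {X : Type*} [MeasurableSpace X] {μ : Measure X}
    {f g : X → ℝ} (hf : MemLp f 2 μ) (hg : MemLp g 2 μ) :
    Integrable (fun x => f x * g x) μ := by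
  have : MemLp (f • g) 1 μ := hg.smul hf
  exact memLp_one_iff_integrable.mp this

private lemma arith_main (a b c p q r ε : ℝ) (hb : 0 < b) (hc : 0 < c)
    (hε0 : 0 < ε) (hε1 : ε < 1)
    (hr : |r| ≤ ε * Real.sqrt b * Real.sqrt c)
    (key : ∀ α β : ℝ, 0 ≤ a - 2*α*p - 2*β*q + α^2*b + β^2*c + 2*α*β*r) :
    -(1 / (1 - ε)) * a + q - (1/2) * c + 2 * p - b ≤ 0 := by
  have h1ε : 0 < 1 - ε := by linarith
  set sb := Real.sqrt b with hsb
  set sc := Real.sqrt c with hsc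
  have hsb2 : sb * sb = b := Real.mul_self_sqrt hb.le
  have hsc2 : sc * sc = c := Real.mul_self_sqrt hc.le
  have hsbpos : 0 < sb := Real.sqrt_pos.mpr hb
  have hscpos : 0 < sc := Real.sqrt_pos.mpr hc
  have hbc : 0 < b * c := mul_pos hb hc
  -- cross term bound : 2*p*q*r ≤ ε*(p^2*c + q^2*b)
  have hX : 2*p*q*r ≤ ε*(p^2*c + q^2*b) := by
    have h1 : 2*p*q*r ≤ 2*(|p| * (|q| * |r|)) := by
      have := le_abs_self (p*q*r)
      rw [abs_mul, abs_mul] at this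
      linarith
    have h2 : 2*(|p| * (|q| * |r|)) ≤ 2*(|p| * (|q| * (ε*sb*sc))) := by
      have hnn : 0 ≤ |p| * |q| := mul_nonneg (abs_nonneg p) (abs_nonneg q)
      have := mul_le_mul_of_nonneg_left hr hnn
      nlinarith
    have e : (|p| * sc - |q| * sb)^2 = p^2 * c + q^2 * b - 2*(|p| * |q|)*(sb*sc) := by
      have ha1 : |p|^2 = p^2 := sq_abs p
      have ha2 : |q|^2 = q^2 := sq_abs q
      have e0 : (|p| * sc - |q| * sb)^2
          = |p|^2 * (sc*sc) + |q|^2 * (sb*sb) - 2*(|p| * |q|)*(sb*sc) := by ring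
      rw [e0, ha1, ha2, hsb2, hsc2]
    have key2 : 2*(|p| * |q|)*(sb*sc) ≤ p^2 * c + q^2 * b := by
      have := sq_nonneg (|p| * sc - |q| * sb)
      rw [e] at this; linarith
    have h3 : 2*(|p| * (|q| * (ε*sb*sc))) ≤ ε*(p^2*c + q^2*b) := by
      have := mul_le_mul_of_nonneg_left key2 hε0.le
      nlinarith
    linarith
  -- Bessel-type inequality
  have hbessel : (1-ε) * (p^2/b + q^2/c) ≤ a := by
    have hk := key (p/b) (q/c)
    have e : a - 2*(p/b)*p - 2*(q/c)*q + (p/b)^2*b + (q/c)^2*c + 2*(p/b)*(q/c)*r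
        = a - p^2/b - q^2/c + 2*p*q*r/(b*c) := by
      field_simp; ring
    rw [e] at hk
    have hcross : 2*p*q*r/(b*c) ≤ ε*(p^2/b + q^2/c) := by
      rw [div_le_iff₀ hbc]
      have e2 : ε*(p^2/b + q^2/c)*(b*c) = ε*(p^2*c + q^2*b) := by
        field_simp; try ring
      rw [e2]; exact hX
    have e3 : (1-ε) * (p^2/b + q^2/c)
        = (p^2/b + q^2/c) - ε*(p^2/b + q^2/c) := by ring
    linarith
  -- Finish
  have h1 : 2*p - b ≤ p^2/b := by
    rw [le_div_iff₀ hb]; nlinarith [sq_nonneg (p - b)]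
  have h2 : q - (1/2)*c ≤ q^2/c := by
    rw [le_div_iff₀ hc]; nlinarith [sq_nonneg (q - c/2)]
  have h3 : -(1/(1-ε))*a ≤ -(p^2/b + q^2/c) := by
    have : p^2/b + q^2/c ≤ a/(1-ε) := by
      rw [le_div_iff₀ h1ε]; linarith [hbessel]
    have e4 : -(1/(1-ε))*a = -(a/(1-ε)) := by ring
    rw [e4]; linarith
  linarith

theorem second_variation_bound_iii {X : Type*} [MeasurableSpace X] (μ : Measure X)
    (f g h : X → ℝ) (hf : MemLp f 2 μ) (hg : MemLp g 2 μ) (hh : MemLp h 2 μ)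
    (hgpos : 0 < ∫ x, g x ^ 2 ∂μ) (hhpos : 0 < ∫ x, h x ^ 2 ∂μ)
    (ε : ℝ) (hε0 : 0 < ε) (hε1 : ε < 1)
    (hortho : |∫ x, g x * h x ∂μ| ≤
      ε * (∫ x, g x ^ 2 ∂μ) ^ (1/2 : ℝ) * (∫ x, h x ^ 2 ∂μ) ^ (1/2 : ℝ)) :
    ∫ x, (-(1 / (1 - ε)) * f x ^ 2 + f x * h x - (1 / 2) * h x ^ 2
      + 2 * f x * g x - g x ^ 2) ∂μ ≤ 0 := by
  have hif2 : Integrable (fun x => f x ^ 2) μ := hf.integrable_sq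
  have hig2 : Integrable (fun x => g x ^ 2) μ := hg.integrable_sq
  have hih2 : Integrable (fun x => h x ^ 2) μ := hh.integrable_sq
  have hifg : Integrable (fun x => f x * g x) μ := integrable_mul_of_L2 hf hg
  have hifh : Integrable (fun x => f x * h x) μ := integrable_mul_of_L2 hf hh
  have high : Integrable (fun x => g x * h x) μ := integrable_mul_of_L2 hg hh
  have hortho' : |∫ x, g x * h x ∂μ| ≤
      ε * Real.sqrt (∫ x, g x ^ 2 ∂μ) * Real.sqrt (∫ x, h x ^ 2 ∂μ) := by
    rwa [Real.sqrt_eq_rpow, Real.sqrt_eq_rpow]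
  -- key expansion
  have key : ∀ α β : ℝ, 0 ≤ (∫ x, f x ^ 2 ∂μ) - 2*α*(∫ x, f x * g x ∂μ)
      - 2*β*(∫ x, f x * h x ∂μ) + α^2*(∫ x, g x ^ 2 ∂μ) + β^2*(∫ x, h x ^ 2 ∂μ)
      + 2*α*β*(∫ x, g x * h x ∂μ) := by
    intro α β
    have i1 : Integrable (fun x => (2*α) * (f x * g x)) μ := hifg.const_mul _
    have iA : Integrable (fun x => f x ^ 2 - (2*α) * (f x * g x)) μ := hif2.sub i1
    have i2 : Integrable (fun x => (2*β) * (f x * h x)) μ := hifh.const_mul _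
    have iB : Integrable (fun x => f x ^ 2 - (2*α) * (f x * g x)
        - (2*β) * (f x * h x)) μ := iA.sub i2
    have i3 : Integrable (fun x => α^2 * g x ^ 2) μ := hig2.const_mul _
    have iC : Integrable (fun x => f x ^ 2 - (2*α) * (f x * g x)
        - (2*β) * (f x * h x) + α^2 * g x ^ 2) μ := iB.add i3
    have i4 : Integrable (fun x => β^2 * h x ^ 2) μ := hih2.const_mul _
    have iD : Integrable (fun x => f x ^ 2 - (2*α) * (f x * g x)
        - (2*β) * (f x * h x) + α^2 * g x ^ 2 + β^2 * h x ^ 2) μ := iC.add i4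
    have i5 : Integrable (fun x => (2*α*β) * (g x * h x)) μ := high.const_mul _
    have hnn : 0 ≤ ∫ x, (f x ^ 2 - (2*α) * (f x * g x) - (2*β) * (f x * h x)
        + α^2 * g x ^ 2 + β^2 * h x ^ 2 + (2*α*β) * (g x * h x)) ∂μ := by
      refine le_trans (integral_nonneg fun x => sq_nonneg (f x - α * g x - β * h x))
        (le_of_eq (integral_congr_ae (Filter.Eventually.of_forall fun x => by ring)))
    rw [integral_add iD i5, integral_add iC i4, integral_add iB i3,
        integral_sub iA i2, integral_sub hif2 i1, integral_const_mul,
        integral_const_mul, integral_const_mul, integral_const_mul,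
        integral_const_mul] at hnn
    linarith
  -- rewrite target
  have i1 : Integrable (fun x => (-(1 / (1 - ε))) * f x ^ 2) μ := hif2.const_mul _
  have iA : Integrable (fun x => (-(1 / (1 - ε))) * f x ^ 2 + f x * h x) μ := i1.add hifh
  have i2 : Integrable (fun x => (1/2 : ℝ) * h x ^ 2) μ := hih2.const_mul _
  have iB : Integrable (fun x => (-(1 / (1 - ε))) * f x ^ 2 + f x * h x
      - (1/2 : ℝ) * h x ^ 2) μ := iA.sub i2
  have i3 : Integrable (fun x => (2:ℝ) * (f x * g x)) μ := hifg.const_mul _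
  have iC : Integrable (fun x => (-(1 / (1 - ε))) * f x ^ 2 + f x * h x
      - (1/2 : ℝ) * h x ^ 2 + (2:ℝ) * (f x * g x)) μ := iB.add i3
  have hI : ∫ x, (-(1 / (1 - ε)) * f x ^ 2 + f x * h x - (1 / 2) * h x ^ 2
      + 2 * f x * g x - g x ^ 2) ∂μ
      = -(1 / (1 - ε)) * (∫ x, f x ^ 2 ∂μ) + (∫ x, f x * h x ∂μ)
        - (1/2) * (∫ x, h x ^ 2 ∂μ) + 2 * (∫ x, f x * g x ∂μ) - (∫ x, g x ^ 2 ∂μ) := by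
    rw [show (fun x => -(1 / (1 - ε)) * f x ^ 2 + f x * h x - (1 / 2) * h x ^ 2
        + 2 * f x * g x - g x ^ 2) = fun x =>
        (-(1 / (1 - ε))) * f x ^ 2 + f x * h x - (1/2 : ℝ) * h x ^ 2
          + (2:ℝ) * (f x * g x) - g x ^ 2
      from funext fun x => by ring]
    rw [integral_sub iC hig2, integral_add iB i3, integral_sub iA i2,
        integral_add i1 hifh, integral_const_mul, integral_const_mul, integral_const_mul]
  rw [hI]
  exact arith_main _ _ _ _ _ _ ε hgpos hhpos hε0 hε1 hortho' key
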